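/- Assume cos(2nα)·(cos(2α) + sin(2α)) ≥ 1 (the small-α regime). Set q := sin(2nα)²/(2·(1 − c̃·c̃ₙ)). Then for each k ∈ {0,1}: (⟨0|⊗ₖI₂)·(M′⊗ₖI₂)·C_X·(ψₖ⊗ₖI₂) = √q · Uₖ, and (⟨1|⊗ₖI₂)·(M′⊗ₖI₂)·C_X·(ψₖ⊗ₖI₂) = 0. (Proposition 3 of the paper, small-α branch: the circuit with projective success outcome 0 retrieves each unitary perfectly with the optimal probability q.) -/

import Mathlib

open Matrix Kronecker Complex Filter
open scoped ComplexOrder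

noncomputable section

/-- Pauli `σx`. -/
def pX : Matrix (Fin 2) (Fin 2) ℂ := !![0, 1; 1, 0]

/-- Pauli `σz`. -/
def pZ : Matrix (Fin 2) (Fin 2) ℂ := !![1, 0; 0, -1]

/-- `|+⟩ = (1,1)/√2`. -/
def plusV : Fin 2 → ℂ := ((Real.sqrt 2 : ℂ))⁻¹ • ![1, 1]

/-- `|−⟩ = (1,−1)/√2`. -/
def minusV : Fin 2 → ℂ := ((Real.sqrt 2 : ℂ))⁻¹ • ![1, -1]

/-- The memory states `ψ₀ = (e^{inα}, e^{-inα})/√2`, `ψ₁ = (e^{-inα}, e^{inα})/√2`. -/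
def psiMem (n : ℕ) (α : ℝ) (k : Fin 2) : Fin 2 → ℂ :=
  if k = 0 then
    ((Real.sqrt 2 : ℂ))⁻¹ • ![Complex.exp (Complex.I * n * α), Complex.exp (-(Complex.I * n * α))]
  else
    ((Real.sqrt 2 : ℂ))⁻¹ • ![Complex.exp (-(Complex.I * n * α)), Complex.exp (Complex.I * n * α)]

/-- The two unitaries `U₀ = diag(e^{iα}, e^{-iα})`, `U₁ = diag(e^{-iα}, e^{iα})`. -/
def Umat (α : ℝ) (k : Fin 2) : Matrix (Fin 2) (Fin 2) ℂ :=
  if k = 0 then !![Complex.exp (Complex.I * α), 0; 0, Complex.exp (-(Complex.I * α))]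
  else !![Complex.exp (-(Complex.I * α)), 0; 0, Complex.exp (Complex.I * α)]

/-- CNOT with second factor as control and first factor as target. -/
def CX : Matrix (Fin 2 × Fin 2) (Fin 2 × Fin 2) ℂ :=
  (1 : Matrix (Fin 2) (Fin 2) ℂ) ⊗ₖ !![(1 : ℂ), 0; 0, 0] + pX ⊗ₖ !![(0 : ℂ), 0; 0, 1]

/-- `ψ ⊗ₖ I₂` : the 4×2 matrix tensoring a column vector with the identity. -/
def ketI (ψ : Fin 2 → ℂ) : Matrix (Fin 2 × Fin 2) (Fin 2) ℂ :=
  Matrix.of fun p b => ψ p.1 * (if p.2 = b then 1 else 0)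

/-- `⟨j| ⊗ₖ I₂` : the 2×6 matrix contracting the qutrit factor with `|j⟩`. -/
def braI (j : Fin 3) : Matrix (Fin 2) (Fin 3 × Fin 2) ℂ :=
  Matrix.of fun b p => if p.1 = j ∧ p.2 = b then 1 else 0

/-- `a = (1 + c̃)(1 − c̃ₙ)/(2(1 − c̃·c̃ₙ))`. -/
def aCoef (n : ℕ) (α : ℝ) : ℝ :=
  (1 + Real.cos (2 * α)) * (1 - Real.cos (2 * n * α)) /
    (2 * (1 - Real.cos (2 * α) * Real.cos (2 * n * α)))

/-- `b = (1 − c̃)(1 + c̃ₙ)/(2(1 − c̃·c̃ₙ))`. -/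
def bCoef (n : ℕ) (α : ℝ) : ℝ :=
  (1 - Real.cos (2 * α)) * (1 + Real.cos (2 * n * α)) /
    (2 * (1 - Real.cos (2 * α) * Real.cos (2 * n * α)))

/-- `a₁′ = (√a, 0, √b)`. -/
def aOne' (n : ℕ) (α : ℝ) : Fin 3 → ℂ :=
  ![((Real.sqrt (aCoef n α) : ℝ) : ℂ), 0, ((Real.sqrt (bCoef n α) : ℝ) : ℂ)]

/-- `a₂′ = (√b, 0, −√a)`. -/
def aTwo' (n : ℕ) (α : ℝ) : Fin 3 → ℂ :=
  ![((Real.sqrt (bCoef n α) : ℝ) : ℂ), 0, ((-Real.sqrt (aCoef n α) : ℝ) : ℂ)]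

/-- The qubit-to-qutrit isometry `M′` with `M′|+⟩ = a₁′`, `M′|−⟩ = a₂′`. -/
def Mmat' (n : ℕ) (α : ℝ) : Matrix (Fin 3) (Fin 2) ℂ :=
  Matrix.vecMulVec (aOne' n α) (star plusV) + Matrix.vecMulVec (aTwo' n α) (star minusV)

set_option maxHeartbeats 2000000 in
theorem circuit_retrieves_unitaries_small_alpha (n : ℕ) (hn : 1 ≤ n) (α : ℝ) (hα : 0 < α)
    (hdist : 4 * n * α < Real.pi)
    (hreg : 1 ≤ Real.cos (2 * n * α) * (Real.cos (2 * α) + Real.sin (2 * α))) (k : Fin 2) :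
    braI 0 * ((Mmat' n α) ⊗ₖ (1 : Matrix (Fin 2) (Fin 2) ℂ)) * CX * ketI (psiMem n α k)
      = ((Real.sqrt (Real.sin (2 * n * α) ^ 2 /
          (2 * (1 - Real.cos (2 * α) * Real.cos (2 * n * α)))) : ℝ) : ℂ) • Umat α k ∧
    braI 1 * ((Mmat' n α) ⊗ₖ (1 : Matrix (Fin 2) (Fin 2) ℂ)) * CX * ketI (psiMem n α k)
      = 0 := by
  -- real scalar facts
  have hn1 : (1:ℝ) ≤ n := by exact_mod_cast hn
  have hpi := Real.pi_pos
  have hna1 : 0 < 2*(n:ℝ)*α := by positivity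
  have hna2 : 2*(n:ℝ)*α < Real.pi/2 := by nlinarith
  have hle : 2*α ≤ 2*(n:ℝ)*α := by nlinarith
  have hc1 : Real.cos (2*(n:ℝ)*α) < 1 := by
    have := Real.cos_lt_cos_of_nonneg_of_le_pi (le_refl 0) (by linarith) hna1
    simpa using this
  have hc2 : 0 < Real.cos (2*(n:ℝ)*α) := Real.cos_pos_of_mem_Ioo ⟨by linarith, hna2⟩
  have hc3 : Real.cos (2*α) ≤ 1 := Real.cos_le_one _
  have hc4 : 0 < Real.cos (2*α) := Real.cos_pos_of_mem_Ioo ⟨by linarith, by linarith⟩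
  have hD : 0 < 1 - Real.cos (2*α) * Real.cos (2*(n:ℝ)*α) := by nlinarith
  have ha : 0 ≤ aCoef n α := by
    unfold aCoef
    have h5 : (0:ℝ) ≤ 1 - Real.cos (2*(n:ℝ)*α) := by linarith
    have h6 : (0:ℝ) ≤ 1 + Real.cos (2*α) := by linarith
    positivity
  have hb : 0 ≤ bCoef n α := by
    unfold bCoef
    have h5 : (0:ℝ) ≤ 1 - Real.cos (2*α) := by linarith
    have h6 : (0:ℝ) ≤ 1 + Real.cos (2*(n:ℝ)*α) := by linarith
    positivity
  have hq : 0 ≤ Real.sin (2*(n:ℝ)*α)^2 /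
      (2*(1 - Real.cos (2*α) * Real.cos (2*(n:ℝ)*α))) := by positivity
  have hcn : 0 < Real.cos ((n:ℝ)*α) := Real.cos_pos_of_mem_Ioo ⟨by linarith, by linarith⟩
  have hsn : 0 < Real.sin ((n:ℝ)*α) := Real.sin_pos_of_pos_of_lt_pi (by positivity) (by linarith)
  have hca : 0 < Real.cos α := Real.cos_pos_of_mem_Ioo ⟨by linarith, by linarith⟩
  have hsa : 0 < Real.sin α := Real.sin_pos_of_pos_of_lt_pi hα (by linarith)
  have ecn : Real.cos ((n:ℝ)*α)^2 = (1 + Real.cos (2*(n:ℝ)*α))/2 := by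
    rw [Real.cos_sq]; ring_nf
  have eca : Real.cos α^2 = (1 + Real.cos (2*α))/2 := by
    rw [Real.cos_sq]; ring_nf
  have esn : Real.sin ((n:ℝ)*α)^2 = (1 - Real.cos (2*(n:ℝ)*α))/2 := by
    rw [Real.sin_sq_eq_half_sub]; ring_nf
  have esa : Real.sin α^2 = (1 - Real.cos (2*α))/2 := by
    rw [Real.sin_sq_eq_half_sub]; ring_nf
  have es2 : Real.sin (2*(n:ℝ)*α)^2 = 1 - Real.cos (2*(n:ℝ)*α)^2 := by
    rw [Real.sin_sq]
  have h1 : Real.sqrt (aCoef n α) * Real.cos ((n:ℝ)*α)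
      = Real.sqrt (Real.sin (2*(n:ℝ)*α)^2 /
          (2*(1 - Real.cos (2*α) * Real.cos (2*(n:ℝ)*α)))) * Real.cos α := by
    rw [← Real.sqrt_sq hcn.le, ← Real.sqrt_sq hca.le, ← Real.sqrt_mul ha, ← Real.sqrt_mul hq]
    congr 1
    unfold aCoef
    rw [ecn, eca, es2]
    field_simp
    ring
  have h2 : Real.sqrt (bCoef n α) * Real.sin ((n:ℝ)*α)
      = Real.sqrt (Real.sin (2*(n:ℝ)*α)^2 /
          (2*(1 - Real.cos (2*α) * Real.cos (2*(n:ℝ)*α)))) * Real.sin α := by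
    rw [← Real.sqrt_sq hsn.le, ← Real.sqrt_sq hsa.le, ← Real.sqrt_mul hb, ← Real.sqrt_mul hq]
    congr 1
    unfold bCoef
    rw [esn, esa, es2]
    field_simp
    ring
  -- complex helpers
  have hexp : ∀ x : ℝ, Complex.exp (Complex.I * x) = Real.cos x + Real.sin x * Complex.I := by
    intro x
    rw [mul_comm, Complex.exp_mul_I, ← Complex.ofReal_cos, ← Complex.ofReal_sin]
  have hexp' : ∀ x : ℝ, Complex.exp (-(Complex.I * x)) = Real.cos x - Real.sin x * Complex.I := by
    intro x
    rw [show -(Complex.I * x) = ((-x : ℝ) : ℂ) * Complex.I by push_cast; ring,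
      Complex.exp_mul_I, ← Complex.ofReal_cos, ← Complex.ofReal_sin]
    push_cast [Real.cos_neg, Real.sin_neg]; ring
  have hnα : (Complex.I * n * α) = Complex.I * ((n*α : ℝ) : ℂ) := by push_cast; ring
  have hs2 : ((Real.sqrt 2 : ℂ)) * (Real.sqrt 2 : ℂ) = 2 := by
    rw [← Complex.ofReal_mul]
    norm_num [Real.mul_self_sqrt]
  have h1c : ((Real.sqrt (aCoef n α) : ℝ) : ℂ) * Real.cos ((n:ℝ)*α)
      = ((Real.sqrt (Real.sin (2*(n:ℝ)*α)^2 /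
          (2*(1 - Real.cos (2*α) * Real.cos (2*(n:ℝ)*α)))) : ℝ):ℂ) * Real.cos α := by
    exact_mod_cast congrArg (Complex.ofReal) h1
  have h2c : ((Real.sqrt (bCoef n α) : ℝ) : ℂ) * Real.sin ((n:ℝ)*α)
      = ((Real.sqrt (Real.sin (2*(n:ℝ)*α)^2 /
          (2*(1 - Real.cos (2*α) * Real.cos (2*(n:ℝ)*α)))) : ℝ):ℂ) * Real.sin α := by
    exact_mod_cast congrArg (Complex.ofReal) h2
  have e1 : Complex.exp (Complex.I * ((n:ℂ) * (α:ℂ)))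
      = ((Real.cos ((n:ℝ)*α) : ℝ) : ℂ) + ((Real.sin ((n:ℝ)*α) : ℝ) : ℂ) * Complex.I := by
    rw [show Complex.I * ((n:ℂ) * (α:ℂ)) = Complex.I * (((n:ℝ)*α : ℝ) : ℂ) by push_cast; ring]
    exact hexp _
  have e2 : Complex.exp (-(Complex.I * ((n:ℂ) * (α:ℂ))))
      = ((Real.cos ((n:ℝ)*α) : ℝ) : ℂ) - ((Real.sin ((n:ℝ)*α) : ℝ) : ℂ) * Complex.I := by
    rw [show -(Complex.I * ((n:ℂ) * (α:ℂ))) = -(Complex.I * (((n:ℝ)*α : ℝ) : ℂ)) by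
      push_cast; ring]
    exact hexp' _
  have hhalf : ((Real.sqrt 2 : ℂ))⁻¹ * ((Real.sqrt 2 : ℂ))⁻¹ = (2:ℂ)⁻¹ := by
    rw [← mul_inv, hs2]
  constructor <;>
  · ext i j
    fin_cases k <;> fin_cases i <;> fin_cases j <;>
      simp [Matrix.mul_apply, Fintype.sum_prod_type, Fin.sum_univ_succ, braI, Mmat', CX, pX,
        ketI, psiMem, plusV, minusV, aOne', aTwo', Matrix.vecMulVec_apply, Matrix.one_apply,
        Umat, hnα, hexp, hexp', -Matrix.cons_vecMulVec] <;>
      simp only [e1, e2, ← Complex.ofReal_cos, ← Complex.ofReal_sin] <;>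
      first
        | linear_combination (2*((Real.sqrt (aCoef n α) :ℝ):ℂ)*((Real.cos ((n:ℝ)*α) :ℝ):ℂ)
            + 2*Complex.I*((Real.sqrt (bCoef n α) :ℝ):ℂ)*((Real.sin ((n:ℝ)*α) :ℝ):ℂ)) * hhalf
            + h1c + Complex.I * h2c
        | linear_combination (2*((Real.sqrt (aCoef n α) :ℝ):ℂ)*((Real.cos ((n:ℝ)*α) :ℝ):ℂ)
            - 2*Complex.I*((Real.sqrt (bCoef n α) :ℝ):ℂ)*((Real.sin ((n:ℝ)*α) :ℝ):ℂ)) * hhalf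
            + h1c - Complex.I * h2c
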